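/- Consider a general reaction system with algebraic chemistry ⟨M,R⟩, stoichiometric matrix N, and an admissible flux function v with respect to a threshold Φ ≥ 0. If x' is a fixed point (N v(x') = 0, x' ≥ 0) and Φ is smaller than every positive coordinate of x', then the abstraction φ(x') = { i ∈ M : x'_i > Φ } is a mass-maintaining set, witnessed by the flux vector v(x'). -/
import Mathlib


/-- A set `C` is closed: products of reactions whose reactants all lie in `C` lie in `C`. -/
def Closed {ι ρ : Type*} (re : ρ → Multiset ι × Multiset ι) (C : Set ι) : Prop :=
  ∀ r : ρ, (∀ a ∈ (re r).1, a ∈ C) → ∀ b ∈ (re r).2, b ∈ C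

/-- Molecule `k` is produced within `C`. -/
def Produced {ι ρ : Type*} [DecidableEq ι] (re : ρ → Multiset ι × Multiset ι)
    (C : Set ι) (k : ι) : Prop :=
  ∃ r : ρ, (∀ a ∈ (re r).1, a ∈ C) ∧ (re r).1.count k < (re r).2.count k

/-- Molecule `k` is used-up within `C`. -/
def UsedUp {ι ρ : Type*} [DecidableEq ι] (re : ρ → Multiset ι × Multiset ι)
    (C : Set ι) (k : ι) : Prop :=
  ∃ r : ρ, (∀ a ∈ (re r).1, a ∈ C) ∧ (re r).2.count k < (re r).1.count k

/-- `S` is self-maintaining. -/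
def SelfMaintaining {ι ρ : Type*} [DecidableEq ι] (re : ρ → Multiset ι × Multiset ι)
    (S : Set ι) : Prop :=
  ∀ k ∈ S, UsedUp re S k → Produced re S k

/-- A semi-organization is closed and self-maintaining. -/
def SemiOrganization {ι ρ : Type*} [DecidableEq ι] (re : ρ → Multiset ι × Multiset ι)
    (S : Set ι) : Prop :=
  Closed re S ∧ SelfMaintaining re S

/-- Entry of the stoichiometric matrix: products minus reactants multiplicity. -/
noncomputable def stoich {ι ρ : Type*} [DecidableEq ι] (re : ρ → Multiset ι × Multiset ι)
    (i : ι) (r : ρ) : ℝ :=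
  ((re r).2.count i : ℝ) - ((re r).1.count i : ℝ)

/-- `C` is mass-maintaining. -/
def MassMaintaining {ι ρ : Type*} [DecidableEq ι] [Fintype ρ]
    (re : ρ → Multiset ι × Multiset ι) (C : Set ι) : Prop :=
  ∃ v : ρ → ℝ,
    (∀ r : ρ, (∀ a ∈ (re r).1, a ∈ C) → 0 < v r) ∧
    (∀ r : ρ, ¬ (∀ a ∈ (re r).1, a ∈ C) → v r = 0) ∧
    (∀ i ∈ C, 0 ≤ ∑ r : ρ, stoich re i r * v r)

/-- An organization is closed and mass-maintaining. -/
def Organization {ι ρ : Type*} [DecidableEq ι] [Fintype ρ]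
    (re : ρ → Multiset ι × Multiset ι) (O : Set ι) : Prop :=
  Closed re O ∧ MassMaintaining re O

/-- The closure of `S`: the smallest closed set containing `S`. -/
def GCL {ι ρ : Type*} (re : ρ → Multiset ι × Multiset ι) (S : Set ι) : Set ι :=
  ⋂₀ {C : Set ι | Closed re C ∧ S ⊆ C}

/-- A catalytic flow system: every molecule has a dilution reaction `{k} → ∅`,
and no molecule is used-up by any other reaction. -/
def CatalyticFlow {ι ρ : Type*} [DecidableEq ι] (re : ρ → Multiset ι × Multiset ι) : Prop :=
  (∀ k : ι, ∃ r : ρ, re r = ({k}, (0 : Multiset ι))) ∧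
  (∀ r : ρ, (¬ ∃ k : ι, re r = ({k}, (0 : Multiset ι))) →
    ∀ k : ι, (re r).1.count k ≤ (re r).2.count k)

/-- A consistent reaction system with persistent molecules `P`. -/
def Consistent {ι ρ : Type*} [DecidableEq ι] (re : ρ → Multiset ι × Multiset ι)
    (P : Set ι) : Prop :=
  (∀ k : ι, k ∉ P → ∃ r : ρ, (re r).1 = {k} ∧ k ∉ (re r).2) ∧
  (∀ r : ρ, ∀ p ∈ P, (re r).1.count p ≤ (re r).2.count p)

/-- `S` is the largest self-maintaining subset of `C`. -/
def IsGSM {ι ρ : Type*} [DecidableEq ι] (re : ρ → Multiset ι × Multiset ι)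
    (C S : Set ι) : Prop :=
  S ⊆ C ∧ SelfMaintaining re S ∧ ∀ T : Set ι, T ⊆ C → SelfMaintaining re T → T ⊆ S

/-- `S` is the largest mass-maintaining subset of `C`. -/
def IsGMM {ι ρ : Type*} [DecidableEq ι] [Fintype ρ] (re : ρ → Multiset ι × Multiset ι)
    (C S : Set ι) : Prop :=
  S ⊆ C ∧ MassMaintaining re S ∧ ∀ T : Set ι, T ⊆ C → MassMaintaining re T → T ⊆ S

/-- An admissible flux function w.r.t. threshold `Φ`: nonnegative, and positive
exactly when all reactants are present (above threshold). -/
def Admissible {ι ρ : Type*} (re : ρ → Multiset ι × Multiset ι) (Φ : ℝ)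
    (v : (ι → ℝ) → ρ → ℝ) : Prop :=
  ∀ x : ι → ℝ, ∀ r : ρ, 0 ≤ v x r ∧ (0 < v x r ↔ ∀ a ∈ (re r).1, x a > Φ)

/-- at a fixed point of the dynamics, the abstraction
`φ(x') = {i | x'_i > Φ}` is mass-maintaining, witnessed by the flux vector
`v x'`. -/
theorem stmt14 {ι ρ : Type*} [Fintype ι] [Fintype ρ] [DecidableEq ι]
    (re : ρ → Multiset ι × Multiset ι) (Φ : ℝ) (hΦ : 0 ≤ Φ)
    (v : (ι → ℝ) → ρ → ℝ) (hv : Admissible re Φ v)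
    (x' : ι → ℝ) (hx : ∀ i : ι, 0 ≤ x' i)
    (hfix : ∀ i : ι, ∑ r : ρ, stoich re i r * v x' r = 0)
    (hthr : ∀ i : ι, 0 < x' i → Φ < x' i) :
    MassMaintaining re {i : ι | Φ < x' i} ∧
    (∀ r : ρ, (∀ a ∈ (re r).1, a ∈ {i : ι | Φ < x' i}) → 0 < v x' r) ∧
    (∀ r : ρ, ¬ (∀ a ∈ (re r).1, a ∈ {i : ι | Φ < x' i}) → v x' r = 0) ∧
    (∀ i ∈ {i : ι | Φ < x' i}, 0 ≤ ∑ r : ρ, stoich re i r * v x' r) := by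
  have h1 : ∀ r : ρ, (∀ a ∈ (re r).1, a ∈ {i : ι | Φ < x' i}) → 0 < v x' r := by
    intro r h
    exact (hv x' r).2.mpr (fun a ha => h a ha)
  have h2 : ∀ r : ρ, ¬ (∀ a ∈ (re r).1, a ∈ {i : ι | Φ < x' i}) → v x' r = 0 := by
    intro r h
    have := (hv x' r).1
    rcases this.lt_or_eq with hlt | heq
    · exact absurd ((hv x' r).2.mp hlt) h
    · exact heq.symm
  have h3 : ∀ i ∈ {i : ι | Φ < x' i}, 0 ≤ ∑ r : ρ, stoich re i r * v x' r := by
    intro i _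
    rw [hfix i]
  exact ⟨⟨v x', h1, h2, h3⟩, h1, h2, h3⟩
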